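/- In the standard stochastic multi-armed bandit with K machines having reward distributions supported in [0,1] and a unique optimal arm j*, if the UCB1(ε) policy (which at trial t pulls an arm maximizing X̂_j + √((2+ε) ln t / T_j(t-1))) is run, then P(T*(n) < n/K) < 2K^{4+2ε}/n^{2+2ε} for all n such that ⌊n/K⌋ > 4(2+ε) ln n / min_{j≠j*}(μ* - μ_j)², where T*(n) is the number of pulls of the optimal arm in the first n trials. -/

import Mathlib

open MeasureTheory ProbabilityTheory Finset

lemma hoeffding_core (p : ℝ) (hp0 : 0 ≤ p) (hp1 : p ≤ 1) (t : ℝ) :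
    1 - p + p * Real.exp t ≤ Real.exp (t * p + t ^ 2 / 8) := by
  have hD : ∀ x : ℝ, 0 < 1 - p + p * Real.exp x := by
    intro x
    rcases eq_or_lt_of_le hp0 with h | h
    · simp [← h]
    · nlinarith [Real.exp_pos x]
  set f : ℝ → ℝ := fun x => Real.log (1 - p + p * Real.exp x) - (x * p + x ^ 2 / 8) with hf_def
  set g : ℝ → ℝ := fun x => p * Real.exp x / (1 - p + p * Real.exp x) - (p + x / 4) with hg_def
  have hDder : ∀ x : ℝ, HasDerivAt (fun x => 1 - p + p * Real.exp x) (p * Real.exp x) x := by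
    intro x
    exact ((Real.hasDerivAt_exp x).const_mul p).const_add (1 - p)
  have hf : ∀ x : ℝ, HasDerivAt f (g x) x := by
    intro x
    have h1 : HasDerivAt (fun x => Real.log (1 - p + p * Real.exp x))
        (p * Real.exp x / (1 - p + p * Real.exp x)) x := (hDder x).log (hD x).ne'
    have h2 : HasDerivAt (fun x : ℝ => x * p + x ^ 2 / 8) (p + x / 4) x := by
      have := ((hasDerivAt_id x).mul_const p).add ((hasDerivAt_pow 2 x).div_const 8)
      refine this.congr_deriv ?_
      push_cast
      ring
    exact h1.sub h2
  have hg : ∀ x : ℝ, HasDerivAt g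
      (p * Real.exp x * (1 - p) / (1 - p + p * Real.exp x) ^ 2 - 1 / 4) x := by
    intro x
    have h1 : HasDerivAt (fun x => p * Real.exp x / (1 - p + p * Real.exp x))
        ((p * Real.exp x * (1 - p + p * Real.exp x) - p * Real.exp x * (p * Real.exp x)) /
          (1 - p + p * Real.exp x) ^ 2) x :=
      ((Real.hasDerivAt_exp x).const_mul p).div (hDder x) (hD x).ne'
    have h2 : HasDerivAt (fun x : ℝ => p + x / 4) (1 / 4) x := by
      simpa using ((hasDerivAt_id x).div_const 4).const_add p
    have := h1.sub h2
    refine this.congr_deriv ?_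
    ring
  have hganti : Antitone g := by
    refine antitone_of_deriv_nonpos (fun x => (hg x).differentiableAt) (fun x => ?_)
    rw [(hg x).deriv]
    have hDx := hD x
    have hnum : p * Real.exp x * (1 - p) / (1 - p + p * Real.exp x) ^ 2 ≤ 1 / 4 := by
      rw [div_le_iff₀ (by positivity)]
      nlinarith [sq_nonneg (p * Real.exp x - (1 - p)), Real.exp_pos x]
    linarith
  have hg0 : g 0 = 0 := by simp [hg_def]
  have hf0 : f 0 = 0 := by simp [hf_def]
  have hft : f t ≤ 0 := by
    rcases le_total 0 t with ht | ht
    · have hanti : AntitoneOn f (Set.Ici 0) := by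
        refine antitoneOn_of_deriv_nonpos (convex_Ici 0)
          (fun x _ => ((hf x).differentiableAt).continuousAt.continuousWithinAt)
          (fun x _ => ((hf x).differentiableAt).differentiableWithinAt) (fun x hx => ?_)
        rw [(hf x).deriv, ← hg0]
        exact hganti (le_of_lt (by simpa using hx))
      have := hanti (Set.self_mem_Ici) (Set.mem_Ici.2 ht) ht
      simpa [hf0] using this
    · have hmono : MonotoneOn f (Set.Iic 0) := by
        refine monotoneOn_of_deriv_nonneg (convex_Iic 0)
          (fun x _ => ((hf x).differentiableAt).continuousAt.continuousWithinAt)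
          (fun x _ => ((hf x).differentiableAt).differentiableWithinAt) (fun x hx => ?_)
        rw [(hf x).deriv, ← hg0]
        exact hganti (le_of_lt (by simpa using hx))
      have := hmono (Set.mem_Iic.2 ht) Set.self_mem_Iic ht
      simpa [hf0] using this

  have hlog : Real.log (1 - p + p * Real.exp t) ≤ t * p + t ^ 2 / 8 := by
    have := hft
    simp only [hf_def] at this
    linarith
  calc 1 - p + p * Real.exp t = Real.exp (Real.log (1 - p + p * Real.exp t)) :=
        (Real.exp_log (hD t)).symm
    _ ≤ Real.exp (t * p + t ^ 2 / 8) := Real.exp_le_exp.2 hlog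

lemma exp_mul_integrable {Ω : Type*} [MeasurableSpace Ω] (μ : Measure Ω)
    [IsProbabilityMeasure μ] (Y : Ω → ℝ) (hm : Measurable Y)
    (hb : ∀ ω, Y ω ∈ Set.Icc (0 : ℝ) 1) (t : ℝ) :
    Integrable (fun ω => Real.exp (t * Y ω)) μ := by
  refine Integrable.mono' (integrable_const (Real.exp |t|))
    ((hm.const_mul t).exp.aestronglyMeasurable) (ae_of_all _ fun ω => ?_)
  rw [Real.norm_eq_abs, abs_of_pos (Real.exp_pos _), Real.exp_le_exp]
  calc t * Y ω ≤ |t * Y ω| := le_abs_self _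
    _ = |t| * |Y ω| := abs_mul _ _
    _ ≤ |t| * 1 := by
        have := (hb ω).1; have := (hb ω).2
        gcongr
        rw [abs_of_nonneg (hb ω).1]; exact (hb ω).2
    _ = |t| := mul_one _

lemma mgf_le_of_Icc {Ω : Type*} [MeasurableSpace Ω] (μ : Measure Ω)
    [IsProbabilityMeasure μ] (Y : Ω → ℝ) (hm : Measurable Y)
    (hb : ∀ ω, Y ω ∈ Set.Icc (0 : ℝ) 1) (t : ℝ) :
    mgf Y μ t ≤ Real.exp (t * (∫ ω, Y ω ∂μ) + t ^ 2 / 8) := by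
  set p := ∫ ω, Y ω ∂μ with hp_def
  have hYint : Integrable Y μ := by
    refine Integrable.mono' (integrable_const 1) hm.aestronglyMeasurable
      (ae_of_all _ fun ω => ?_)
    rw [Real.norm_eq_abs, abs_of_nonneg (hb ω).1]; exact (hb ω).2
  have hp0 : 0 ≤ p := integral_nonneg fun ω => (hb ω).1
  have hp1 : p ≤ 1 := by
    have := integral_mono hYint (integrable_const 1) (fun ω => (hb ω).2)
    simpa using this
  have hpt : ∀ ω, Real.exp (t * Y ω) ≤ 1 - Y ω + Y ω * Real.exp t := by
    intro ω
    have h := convexOn_exp.2 (Set.mem_univ (0 : ℝ)) (Set.mem_univ t)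
      (show (0:ℝ) ≤ 1 - Y ω by linarith [(hb ω).2]) ((hb ω).1)
      (by ring : (1 - Y ω) + Y ω = 1)
    simp only [smul_eq_mul, mul_zero, zero_add, Real.exp_zero, mul_one] at h
    rw [mul_comm t (Y ω)]
    linarith
  have hint1 : Integrable (fun ω => Real.exp (t * Y ω)) μ :=
    exp_mul_integrable μ Y hm hb t
  have hint2 : Integrable (fun ω => 1 - Y ω + Y ω * Real.exp t) μ :=
    ((integrable_const (1 : ℝ)).sub hYint).add (hYint.mul_const _)
  calc mgf Y μ t = ∫ ω, Real.exp (t * Y ω) ∂μ := rfl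
    _ ≤ ∫ ω, (1 - Y ω + Y ω * Real.exp t) ∂μ := integral_mono hint1 hint2 hpt
    _ = 1 - p + p * Real.exp t := by
        have hA : Integrable (fun ω => 1 - Y ω) μ := (integrable_const 1).sub hYint
        have hB : Integrable (fun ω => Y ω * Real.exp t) μ := hYint.mul_const _
        rw [integral_add hA hB, integral_sub (integrable_const 1) hYint,
          integral_mul_const, integral_const]
        simp [hp_def]
    _ ≤ Real.exp (t * p + t ^ 2 / 8) := hoeffding_core p hp0 hp1 t

section Chernoff

variable {Ω : Type*} [MeasurableSpace Ω] (μ : Measure Ω) [IsProbabilityMeasure μ]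
  {K : ℕ} (X : Fin K → ℕ → Ω → ℝ)
  (hmeas : ∀ j s, Measurable (X j s))
  (hindep : iIndepFun
      (fun (q : Fin K × ℕ) ω => X q.1 q.2 ω) μ)
  (hbdd : ∀ j s ω, X j s ω ∈ Set.Icc (0 : ℝ) 1)
  (j : Fin K) (p : ℝ) (hp : ∀ s, ∫ ω, X j s ω ∂μ = p) (m : ℕ)

include hmeas hindep hbdd hp

lemma mgf_sum_facts (t : ℝ) :
    mgf (fun ω => ∑ i ∈ Finset.range m, X j i ω) μ t ≤
      Real.exp (m * (t * p + t ^ 2 / 8)) ∧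
    Integrable (fun ω => Real.exp (t * ∑ i ∈ Finset.range m, X j i ω)) μ := by
  classical
  set Y : Fin K × ℕ → Ω → ℝ := fun q ω => X q.1 q.2 ω with hY_def
  set s : Finset (Fin K × ℕ) := (Finset.range m).image (fun i => (j, i)) with hs_def
  have hinj : Function.Injective (fun i : ℕ => (j, i)) := by
    intro a b h; simpa using h
  have hsum : ∀ ω, ∑ q ∈ s, Y q ω = ∑ i ∈ Finset.range m, X j i ω := by
    intro ω
    rw [hs_def, Finset.sum_image (fun a _ b _ h => hinj h)]
  have hmeasY : ∀ q : Fin K × ℕ, Measurable (Y q) := fun q => hmeas q.1 q.2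
  constructor
  · have hmgf := hindep.mgf_sum (t := t) hmeasY s
    have heq : mgf (fun ω => ∑ i ∈ Finset.range m, X j i ω) μ t = mgf (∑ q ∈ s, Y q) μ t := by
      unfold mgf
      congr 1
      funext ω
      simp only [Finset.sum_apply, hsum]
    rw [heq, hmgf, hs_def, Finset.prod_image (fun a _ b _ h => hinj h)]
    calc ∏ i ∈ Finset.range m, mgf (Y (j, i)) μ t
        ≤ ∏ _i ∈ Finset.range m, Real.exp (t * p + t ^ 2 / 8) := by
          refine Finset.prod_le_prod (fun i _ => mgf_nonneg) (fun i _ => ?_)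
          have := mgf_le_of_Icc μ (X j i) (hmeas j i) (fun ω => hbdd j i ω) t
          rwa [hp i] at this
      _ = Real.exp (m * (t * p + t ^ 2 / 8)) := by
          rw [Finset.prod_const, Finset.card_range, ← Real.exp_nat_mul]
  · have hint := hindep.integrable_exp_mul_sum (t := t) hmeasY
      (s := s) (fun q _ => exp_mul_integrable μ (Y q) (hmeasY q) (fun ω => hbdd q.1 q.2 ω) t)
    refine hint.congr (ae_of_all _ fun ω => ?_)
    simp only [Finset.sum_apply, hsum]

lemma chernoff_upper (a : ℝ) (ha : 0 ≤ a) :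
    μ {ω | (m : ℝ) * p + m * a ≤ ∑ i ∈ Finset.range m, X j i ω} ≤
      ENNReal.ofReal (Real.exp (-(2 * m * a ^ 2))) := by
  obtain ⟨hmgf, hint⟩ := mgf_sum_facts μ X hmeas hindep hbdd j p hp m (4 * a)
  have hch := measure_ge_le_exp_mul_mgf (μ := μ)
    (X := fun ω => ∑ i ∈ Finset.range m, X j i ω) ((m : ℝ) * p + m * a)
    (by positivity : (0:ℝ) ≤ 4 * a) hint
  have hb : (μ {ω | (m : ℝ) * p + m * a ≤ ∑ i ∈ Finset.range m, X j i ω}).toReal ≤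
      Real.exp (-(2 * m * a ^ 2)) := by
    refine hch.trans ?_
    calc Real.exp (-(4 * a) * ((m : ℝ) * p + m * a)) *
          mgf (fun ω => ∑ i ∈ Finset.range m, X j i ω) μ (4 * a)
        ≤ Real.exp (-(4 * a) * ((m : ℝ) * p + m * a)) *
            Real.exp (m * (4 * a * p + (4 * a) ^ 2 / 8)) := by
          exact mul_le_mul_of_nonneg_left hmgf (Real.exp_pos _).le
      _ = Real.exp (-(2 * m * a ^ 2)) := by
          rw [← Real.exp_add]; congr 1; ring
  rw [← ENNReal.ofReal_toReal (measure_ne_top μ _)]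
  exact ENNReal.ofReal_le_ofReal hb

lemma chernoff_lower (a : ℝ) (ha : 0 ≤ a) :
    μ {ω | ∑ i ∈ Finset.range m, X j i ω ≤ (m : ℝ) * p - m * a} ≤
      ENNReal.ofReal (Real.exp (-(2 * m * a ^ 2))) := by
  obtain ⟨hmgf, hint⟩ := mgf_sum_facts μ X hmeas hindep hbdd j p hp m (-(4 * a))
  have hch := measure_le_le_exp_mul_mgf (μ := μ)
    (X := fun ω => ∑ i ∈ Finset.range m, X j i ω) ((m : ℝ) * p - m * a)
    (by linarith : -(4 * a) ≤ 0) hint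
  have hb : (μ {ω | ∑ i ∈ Finset.range m, X j i ω ≤ (m : ℝ) * p - m * a}).toReal ≤
      Real.exp (-(2 * m * a ^ 2)) := by
    refine hch.trans ?_
    calc Real.exp (-(-(4 * a)) * ((m : ℝ) * p - m * a)) *
          mgf (fun ω => ∑ i ∈ Finset.range m, X j i ω) μ (-(4 * a))
        ≤ Real.exp (-(-(4 * a)) * ((m : ℝ) * p - m * a)) *
            Real.exp (m * (-(4 * a) * p + (-(4 * a)) ^ 2 / 8)) := by
          exact mul_le_mul_of_nonneg_left hmgf (Real.exp_pos _).le
      _ = Real.exp (-(2 * m * a ^ 2)) := by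
          rw [← Real.exp_add]; congr 1; ring
  rw [← ENNReal.ofReal_toReal (measure_ne_top μ _)]
  exact ENNReal.ofReal_le_ofReal hb

end Chernoff

set_option maxHeartbeats 2000000 in
/-- High probability bound on the number of optimal pulls under the UCB1(ε) policy
(Lemma 1).  Trials are indexed from 0, so trial `t` is the `(t+1)`-th trial;
`X j s` is the reward of machine `j` at its `(s+1)`-th pull, `A t` the arm pulled at
trial `t`, `T j t` the number of pulls of arm `j` in the first `t` trials and
`Xhat j t` the empirical mean reward of arm `j` after the first `t` trials. -/
theorem ucb1_eps_high_prob_bound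
    (Ω : Type*) [MeasurableSpace Ω] (μ : Measure Ω) [IsProbabilityMeasure μ]
    (K : ℕ) (hK : 2 ≤ K) (ε : ℝ) (hε : 0 ≤ ε)
    (X : Fin K → ℕ → Ω → ℝ) (μs : Fin K → ℝ)
    (hmeas : ∀ j s, Measurable (X j s))
    (hindep : iIndepFun
      (fun (q : Fin K × ℕ) ω => X q.1 q.2 ω) μ)
    (hident : ∀ j s, IdentDistrib (X j s) (X j 0) μ μ)
    (hbdd : ∀ j s ω, X j s ω ∈ Set.Icc (0 : ℝ) 1)
    (hmean : ∀ j s, ∫ ω, X j s ω ∂μ = μs j)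
    (jstar : Fin K) (hopt : ∀ j, j ≠ jstar → μs j < μs jstar)
    (A : ℕ → Ω → Fin K)
    (T : Fin K → ℕ → Ω → ℕ)
    (hT : ∀ j t ω, T j t ω = ((Finset.range t).filter (fun t' => A t' ω = j)).card)
    (Xhat : Fin K → ℕ → Ω → ℝ)
    (hXhat : ∀ j t ω,
      Xhat j t ω = (∑ s ∈ Finset.range (T j t ω), X j s ω) / (T j t ω))
    -- initialization: each arm is pulled once during the first K trials
    (hinit : ∀ ω, ∀ t, (h : t < K) → A t ω = ⟨t, h⟩)
    -- UCB1(ε) policy: the pulled arm maximizes the upper confidence index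
    (hpolicy : ∀ ω t, K ≤ t → ∀ j : Fin K,
      Xhat j t ω + Real.sqrt ((2 + ε) * Real.log (t + 1) / (T j t ω)) ≤
        Xhat (A t ω) t ω +
          Real.sqrt ((2 + ε) * Real.log (t + 1) / (T (A t ω) t ω)))
    (n : ℕ) (hn : 1 ≤ n)
    (hcond : ∀ j, j ≠ jstar →
      4 * (2 + ε) * Real.log n / (μs jstar - μs j) ^ 2 < ((n / K : ℕ) : ℝ)) :
    μ {ω | (T jstar n ω : ℝ) < (n : ℝ) / K} <
      ENNReal.ofReal (2 * (K : ℝ) ^ ((4 : ℝ) + 2 * ε) / (n : ℝ) ^ ((2 : ℝ) + 2 * ε)) := by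
  classical
  set ℓ0 : ℕ := n / K with hℓ0_def
  have hK0 : 0 < K := by omega
  have hK0r : (0 : ℝ) < K := by exact_mod_cast hK0
  have hn0r : (0 : ℝ) < n := by exact_mod_cast hn
  -- ℓ0 ≥ 1 and K ≤ n
  have hl0 : 1 ≤ ℓ0 := by
    have hnt : Nontrivial (Fin K) := Fin.nontrivial_iff_two_le.mpr hK
    obtain ⟨j0, hj0⟩ := exists_ne jstar
    have h := hcond j0 hj0
    have hge : (0 : ℝ) ≤ 4 * (2 + ε) * Real.log n / (μs jstar - μs j0) ^ 2 := by
      have hlogn : 0 ≤ Real.log n := Real.log_nonneg (by exact_mod_cast hn)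
      positivity
    have : (0 : ℝ) < (ℓ0 : ℝ) := lt_of_le_of_lt hge h
    exact_mod_cast this
  have hKn : K ≤ n := (Nat.one_le_div_iff hK0).mp hl0
  have hl0r : (0 : ℝ) < (ℓ0 : ℝ) := by exact_mod_cast hl0
  -- the threshold c = n/K ≥ 1
  have hcpos : (0 : ℝ) < (n : ℝ) / K := by positivity
  have hc1 : (1 : ℝ) ≤ (n : ℝ) / K := by
    rw [le_div_iff₀ hK0r]; norm_num; exact_mod_cast hKn
  have hlogc : 0 ≤ Real.log ((n : ℝ) / K) := Real.log_nonneg hc1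
  -- radii
  set aa : ℕ → ℝ := fun m => Real.sqrt ((2 + ε) * Real.log ((n : ℝ) / K) / m) with haa_def
  have haa_nonneg : ∀ m, 0 ≤ aa m := fun m => Real.sqrt_nonneg _
  -- bad events
  set F1 : Fin K → Set Ω := fun jj =>
    {ω | (ℓ0 : ℝ) * μs jj + ℓ0 * aa ℓ0 ≤ ∑ i ∈ Finset.range ℓ0, X jj i ω} with hF1_def
  set F2 : ℕ → Set Ω := fun m =>
    {ω | ∑ i ∈ Finset.range m, X jstar i ω ≤ (m : ℝ) * μs jstar - m * aa m} with hF2_def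
  -- pathwise inclusion
  have hsub : {ω | (T jstar n ω : ℝ) < (n : ℝ) / K} ⊆
      (⋃ jj ∈ Finset.univ.erase jstar, F1 jj) ∪ (⋃ m ∈ Finset.Icc 1 n, F2 m) := by
    intro ω hω
    simp only [Set.mem_setOf_eq] at hω
    -- integer form
    have hTKn : T jstar n ω * K < n := by
      have h := (lt_div_iff₀ hK0r).mp hω
      exact_mod_cast h
    -- sum of counts
    have hsum_t : ∀ t, ∑ i : Fin K, T i t ω = t := by
      intro t
      have h := Finset.card_eq_sum_card_fiberwise
        (f := fun t' => A t' ω) (s := Finset.range t) (t := Finset.univ)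
        (fun x _ => Finset.mem_univ _)
      rw [Finset.card_range] at h
      calc ∑ i : Fin K, T i t ω
          = ∑ i : Fin K, ((Finset.range t).filter (fun t' => A t' ω = i)).card :=
            Finset.sum_congr rfl (fun i _ => hT i t ω)
        _ = t := h.symm
    -- some suboptimal arm pulled at least ℓ0 + 1 times
    have hexists : ∃ jj : Fin K, jj ≠ jstar ∧ ℓ0 + 1 ≤ T jj n ω := by
      by_contra hcon
      push_neg at hcon
      have hsum_le : n ≤ (K - 1) * ℓ0 + T jstar n ω := by
        have h1 : ∑ i ∈ Finset.univ.erase jstar, T i n ω + T jstar n ω = ∑ i : Fin K, T i n ω :=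
          Finset.sum_erase_add _ _ (Finset.mem_univ jstar)
        have h2 : ∑ i ∈ Finset.univ.erase jstar, T i n ω ≤ (K - 1) * ℓ0 := by
          have := Finset.sum_le_card_nsmul (Finset.univ.erase jstar) (fun i => T i n ω) ℓ0
            (fun x hx => by
              have := hcon x (Finset.ne_of_mem_erase hx)
              show T x n ω ≤ ℓ0
              omega)
          rwa [Finset.card_erase_of_mem (Finset.mem_univ jstar), Finset.card_univ,
            Fintype.card_fin, smul_eq_mul] at this
        have := hsum_t n
        omega
      have hl0K : ℓ0 * K ≤ n := Nat.div_mul_le_self n K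
      have hmul : n * K ≤ ((K - 1) * ℓ0 + T jstar n ω) * K :=
        Nat.mul_le_mul_right K hsum_le
      have hmul2 : ((K - 1) * ℓ0 + T jstar n ω) * K = (K - 1) * (ℓ0 * K) + T jstar n ω * K := by
        rw [Nat.add_mul, Nat.mul_assoc]
      have hmul3 : (K - 1) * (ℓ0 * K) + T jstar n ω * K ≤ (K - 1) * n + (n - 1) := by
        exact Nat.add_le_add (Nat.mul_le_mul_left _ hl0K) (by omega)
      have hmul4 : (K - 1) * n = n * K - n := by
        rw [Nat.sub_mul, one_mul, Nat.mul_comm]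
      have hnK : n ≤ n * K := Nat.le_mul_of_pos_right n hK0
      omega
    obtain ⟨j, hjne, hjcount⟩ := hexists
    -- the step rule for counts
    have hTsucc : ∀ (jj : Fin K) t, T jj (t + 1) ω = T jj t ω + (if A t ω = jj then 1 else 0) := by
      intro jj t
      rw [hT, hT, Finset.range_add_one, Finset.filter_insert]
      by_cases h : A t ω = jj
      · rw [if_pos h, if_pos h, Finset.card_insert_of_notMem]
        intro hmem
        exact absurd (Finset.mem_range.mp (Finset.mem_filter.mp hmem).1) (lt_irrefl t)
      · rw [if_neg h, if_neg h, add_zero]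
    have hT0 : ∀ jj : Fin K, T jj 0 ω = 0 := by
      intro jj; rw [hT]; simp
    -- find the trial t0 of the (ℓ0+1)-th pull of arm j
    have hn1eq : n - 1 + 1 = n := by omega
    have hex : ∃ t, ℓ0 + 1 ≤ T j (t + 1) ω := by
      refine ⟨n - 1, ?_⟩
      rwa [hn1eq]
    set t0 := Nat.find hex with ht0_def
    have hspec : ℓ0 + 1 ≤ T j (t0 + 1) ω := Nat.find_spec hex
    have ht0le : t0 ≤ n - 1 := Nat.find_min' hex (by rwa [hn1eq])
    have ht0n : t0 < n := by omega
    have ht0pos : 0 < t0 := by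
      rcases Nat.eq_zero_or_pos t0 with h0 | h0
      · exfalso
        have := hTsucc j 0
        rw [hT0 j] at this
        rw [h0] at hspec
        rw [this] at hspec
        split at hspec <;> omega
      · exact h0
    have hminlt : T j t0 ω ≤ ℓ0 := by
      have h := Nat.find_min hex (show t0 - 1 < t0 by omega)
      have ht1eq : t0 - 1 + 1 = t0 := by omega
      rw [ht1eq] at h
      omega
    have hstep := hTsucc j t0
    have hA0 : A t0 ω = j := by
      by_contra h
      rw [if_neg h] at hstep
      omega
    have hTj : T j t0 ω = ℓ0 := by
      rw [if_pos hA0] at hstep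
      omega
    -- t0 ≥ K
    have hKt0 : K ≤ t0 := by
      by_contra hlt
      push_neg at hlt
      have hAt0 : A t0 ω = ⟨t0, hlt⟩ := hinit ω t0 hlt
      have hjval : (j : ℕ) = t0 := by rw [← hA0, hAt0]
      have hpos : 0 < T j t0 ω := by omega
      rw [hT] at hpos
      obtain ⟨t', ht'⟩ := Finset.card_pos.mp hpos
      have ht'2 := Finset.mem_filter.mp ht'
      have ht'lt : t' < t0 := Finset.mem_range.mp ht'2.1
      have : A t' ω = ⟨t', by omega⟩ := hinit ω t' (by omega)
      have : (j : ℕ) = t' := by rw [← ht'2.2, this]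
      omega
    -- every arm pulled at least once before t0
    have hTpos : ∀ i : Fin K, 1 ≤ T i t0 ω := by
      intro i
      rw [hT]
      refine Finset.card_pos.mpr ⟨(i : ℕ), ?_⟩
      refine Finset.mem_filter.mpr ⟨Finset.mem_range.mpr (by omega), ?_⟩
      rw [hinit ω i (by omega)]
    have ht0ge : ℓ0 + (K - 1) ≤ t0 := by
      have h1 : ∑ i ∈ Finset.univ.erase j, T i t0 ω + T j t0 ω = ∑ i : Fin K, T i t0 ω :=
        Finset.sum_erase_add _ _ (Finset.mem_univ j)
      have h2 : (K - 1) ≤ ∑ i ∈ Finset.univ.erase j, T i t0 ω := by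
        have := Finset.card_nsmul_le_sum (Finset.univ.erase j) (fun i => T i t0 ω) 1
          (fun x _ => hTpos x)
        rwa [Finset.card_erase_of_mem (Finset.mem_univ j), Finset.card_univ,
          Fintype.card_fin, smul_eq_mul, mul_one] at this
      have := hsum_t t0
      omega
    -- (t0+1 : ℝ) > n/K
    have hct0 : (n : ℝ) / K < (t0 : ℝ) + 1 := by
      rw [div_lt_iff₀ hK0r]
      have hmod : n < K * ℓ0 + K := by
        have h1 : K * ℓ0 + n % K = n := Nat.div_add_mod n K
        have h2 := Nat.mod_lt n hK0
        omega
      have h1 : (n : ℝ) < (K : ℝ) * ℓ0 + K := by exact_mod_cast hmod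
      have h2 : (ℓ0 : ℝ) + K ≤ (t0 : ℝ) + 1 := by
        have : ℓ0 + K ≤ t0 + 1 := by omega
        exact_mod_cast this
      have hK2 : (2 : ℝ) ≤ K := by exact_mod_cast hK
      nlinarith [mul_le_mul_of_nonneg_right h2 hK0r.le,
        mul_le_mul_of_nonneg_right hK2 hK0r.le]
    have hlog1 : Real.log ((n : ℝ) / K) ≤ Real.log ((t0 : ℝ) + 1) :=
      Real.log_le_log hcpos hct0.le
    have hlog2 : Real.log ((t0 : ℝ) + 1) ≤ Real.log n := by
      apply Real.log_le_log (by positivity)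
      have : t0 + 1 ≤ n := by omega
      exact_mod_cast this
    -- policy inequality at t0
    have hpol := hpolicy ω t0 hKt0 jstar
    rw [hA0, hTj] at hpol
    set s0 := T jstar t0 ω with hs0_def
    have hs01 : 1 ≤ s0 := hTpos jstar
    have hs0n : s0 ≤ n := by
      have : s0 ≤ t0 := by
        rw [hs0_def, hT]
        exact le_trans (Finset.card_filter_le _ _) (le_of_eq (Finset.card_range t0))
      omega
    have hs0r : (0 : ℝ) < (s0 : ℝ) := by exact_mod_cast hs01
    have hxj : Xhat j t0 ω = (∑ i ∈ Finset.range ℓ0, X j i ω) / (ℓ0 : ℝ) := by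
      rw [hXhat, hTj]
    have hxs : Xhat jstar t0 ω = (∑ i ∈ Finset.range s0, X jstar i ω) / (s0 : ℝ) := by
      rw [hXhat]
    by_cases hcase : (ℓ0 : ℝ) * μs j + ℓ0 * aa ℓ0 ≤ ∑ i ∈ Finset.range ℓ0, X j i ω
    · refine Set.mem_union_left _ (Set.mem_iUnion₂_of_mem ?_ hcase)
      exact Finset.mem_erase.mpr ⟨hjne, Finset.mem_univ j⟩
    · -- arm j's empirical mean is not too high; deduce lower deviation of jstar
      push_neg at hcase
      set Δ := μs jstar - μs j with hΔ_def
      have hΔ : 0 < Δ := by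
        have := hopt j hjne
        simp only [hΔ_def]
        linarith
      have hup : Xhat j t0 ω < μs j + aa ℓ0 := by
        rw [hxj, div_lt_iff₀ hl0r]
        nlinarith [hcase]
      set R := Real.sqrt ((2 + ε) * Real.log ((t0 : ℝ) + 1) / ℓ0) with hR_def
      have haR : aa ℓ0 ≤ R := by
        apply Real.sqrt_le_sqrt
        rw [div_le_div_iff_of_pos_right hl0r]
        exact mul_le_mul_of_nonneg_left hlog1 (by linarith)
      have hRD : R < Δ / 2 := by
        have hcondj := hcond j hjne
        have hA4 : 4 * (2 + ε) * Real.log n < (ℓ0 : ℝ) * Δ ^ 2 := by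
          have := (div_lt_iff₀ (by positivity : (0:ℝ) < Δ ^ 2)).mp hcondj
          linarith [this]
        have hlogt0 : 0 ≤ Real.log ((t0 : ℝ) + 1) := le_trans hlogc hlog1
        have h1 : (2 + ε) * Real.log ((t0 : ℝ) + 1) / ℓ0 < (Δ / 2) ^ 2 := by
          rw [div_pow, div_lt_div_iff₀ hl0r (by norm_num : (0:ℝ) < 2 ^ 2)]
          have hmul := mul_le_mul_of_nonneg_left hlog2 (by linarith : (0:ℝ) ≤ 2 + ε)
          linarith [hmul, hA4]
        have h2 := Real.sqrt_lt_sqrt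
          (div_nonneg (mul_nonneg (by linarith) hlogt0) (le_of_lt hl0r)) h1
        rwa [Real.sqrt_sq (by linarith : (0:ℝ) ≤ Δ / 2)] at h2
      have hsa : aa s0 ≤ Real.sqrt ((2 + ε) * Real.log ((t0 : ℝ) + 1) / s0) := by
        apply Real.sqrt_le_sqrt
        rw [div_le_div_iff_of_pos_right hs0r]
        exact mul_le_mul_of_nonneg_left hlog1 (by linarith)
      have hchain : Xhat jstar t0 ω + Real.sqrt ((2 + ε) * Real.log ((t0 : ℝ) + 1) / s0) <
          μs jstar := by
        have h3 : Xhat jstar t0 ω + Real.sqrt ((2 + ε) * Real.log ((t0 : ℝ) + 1) / s0) ≤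
            Xhat j t0 ω + R := hpol
        linarith [hup, haR, hRD]
      have h4 : Xhat jstar t0 ω ≤ μs jstar - aa s0 := by
        have hsq := Real.sqrt_nonneg ((2 + ε) * Real.log ((t0 : ℝ) + 1) / s0)
        linarith [hsa, hchain]
      have h5 : ∑ i ∈ Finset.range s0, X jstar i ω ≤ (s0 : ℝ) * μs jstar - s0 * aa s0 := by
        rw [hxs] at h4
        have := (div_le_iff₀ hs0r).mp h4
        nlinarith [this]
      refine Set.mem_union_right _ (Set.mem_iUnion₂_of_mem ?_ h5)
      exact Finset.mem_Icc.mpr ⟨hs01, hs0n⟩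
  -- probability bounds
  set Breal : ℝ := Real.exp (-(2 * (2 + ε) * Real.log ((n : ℝ) / K))) with hB_def
  have hBpos : 0 < Breal := Real.exp_pos _
  have hexp_eq : ∀ m : ℕ, 1 ≤ m → Real.exp (-(2 * m * (aa m) ^ 2)) = Breal := by
    intro m hm
    have hmr : (0 : ℝ) < m := by exact_mod_cast hm
    rw [hB_def]
    congr 1
    rw [haa_def]
    rw [Real.sq_sqrt (by positivity)]
    field_simp
  have hb1 : ∀ jj : Fin K, jj ∈ Finset.univ.erase jstar →
      μ (F1 jj) ≤ ENNReal.ofReal Breal := by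
    intro jj _
    have h := chernoff_upper μ X hmeas hindep hbdd jj (μs jj) (fun s => hmean jj s) ℓ0
      (aa ℓ0) (haa_nonneg ℓ0)
    rwa [hexp_eq ℓ0 hl0] at h
  have hb2 : ∀ m ∈ Finset.Icc 1 n, μ (F2 m) ≤ ENNReal.ofReal Breal := by
    intro m hm
    have hm1 : 1 ≤ m := (Finset.mem_Icc.mp hm).1
    have h := chernoff_lower μ X hmeas hindep hbdd jstar (μs jstar)
      (fun s => hmean jstar s) m (aa m) (haa_nonneg m)
    rwa [hexp_eq m hm1] at h
  -- sum up
  have hcount : ((K - 1 + n : ℕ) : ℝ) * Breal < 2 * (K : ℝ) ^ ((4 : ℝ) + 2 * ε) /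
      (n : ℝ) ^ ((2 : ℝ) + 2 * ε) := by
    have hBc : Breal = ((n : ℝ) / K) ^ (-(((4 : ℝ) + 2 * ε))) := by
      rw [Real.rpow_def_of_pos hcpos, hB_def]
      congr 1
      ring
    have hcy : ((n : ℝ) / K) ^ (-(((4 : ℝ) + 2 * ε))) =
        (K : ℝ) ^ ((4 : ℝ) + 2 * ε) / (n : ℝ) ^ ((4 : ℝ) + 2 * ε) := by
      rw [Real.rpow_neg (le_of_lt hcpos), Real.div_rpow hn0r.le hK0r.le, inv_div]
    have hny : (n : ℝ) ^ ((4 : ℝ) + 2 * ε) =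
        (n : ℝ) ^ ((2 : ℝ) + 2 * ε) * (n : ℝ) ^ (2 : ℕ) := by
      rw [← Real.rpow_natCast (n : ℝ) 2, ← Real.rpow_add hn0r]
      ring_nf
    have hN : ((K - 1 + n : ℕ) : ℝ) < 2 * (n : ℝ) ^ (2 : ℕ) := by
      have h1 : ((K - 1 + n : ℕ) : ℝ) = (K : ℝ) - 1 + n := by
        push_cast [Nat.cast_sub (show 1 ≤ K by omega)]
        ring
      rw [h1]
      have h2 : (K : ℝ) ≤ n := by exact_mod_cast hKn
      have h3 : (1 : ℝ) ≤ n := by exact_mod_cast hn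
      nlinarith
    have hKy : (0:ℝ) < (K : ℝ) ^ ((4 : ℝ) + 2 * ε) := Real.rpow_pos_of_pos hK0r _
    have hnz : (0:ℝ) < (n : ℝ) ^ ((2 : ℝ) + 2 * ε) := Real.rpow_pos_of_pos hn0r _
    rw [hBc, hcy, ← mul_div_assoc, div_lt_div_iff₀ (Real.rpow_pos_of_pos hn0r _) hnz, hny]
    nlinarith [mul_lt_mul_of_pos_right hN (mul_pos hKy hnz)]
  have htarget_pos : (0:ℝ) < 2 * (K : ℝ) ^ ((4 : ℝ) + 2 * ε) / (n : ℝ) ^ ((2 : ℝ) + 2 * ε) := by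
    have hKy : (0:ℝ) < (K : ℝ) ^ ((4 : ℝ) + 2 * ε) := Real.rpow_pos_of_pos hK0r _
    have hnz : (0:ℝ) < (n : ℝ) ^ ((2 : ℝ) + 2 * ε) := Real.rpow_pos_of_pos hn0r _
    positivity
  calc μ {ω | (T jstar n ω : ℝ) < (n : ℝ) / K}
      ≤ μ ((⋃ jj ∈ Finset.univ.erase jstar, F1 jj) ∪ (⋃ m ∈ Finset.Icc 1 n, F2 m)) :=
        measure_mono hsub
    _ ≤ μ (⋃ jj ∈ Finset.univ.erase jstar, F1 jj) + μ (⋃ m ∈ Finset.Icc 1 n, F2 m) :=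
        measure_union_le _ _
    _ ≤ (∑ jj ∈ Finset.univ.erase jstar, μ (F1 jj)) + ∑ m ∈ Finset.Icc 1 n, μ (F2 m) :=
        add_le_add (measure_biUnion_finset_le _ _) (measure_biUnion_finset_le _ _)
    _ ≤ (∑ _jj ∈ Finset.univ.erase jstar, ENNReal.ofReal Breal) +
          ∑ _m ∈ Finset.Icc 1 n, ENNReal.ofReal Breal :=
        add_le_add (Finset.sum_le_sum hb1) (Finset.sum_le_sum hb2)
    _ = ((K - 1 + n : ℕ) : ENNReal) * ENNReal.ofReal Breal := by
        rw [Finset.sum_const, Finset.sum_const,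
          Finset.card_erase_of_mem (Finset.mem_univ jstar), Finset.card_univ,
          Fintype.card_fin, Nat.card_Icc, ← add_nsmul]
        have hcard : K - 1 + (n + 1 - 1) = K - 1 + n := by omega
        rw [hcard, nsmul_eq_mul]
    _ = ENNReal.ofReal (((K - 1 + n : ℕ) : ℝ) * Breal) := by
        rw [← ENNReal.ofReal_natCast (K - 1 + n), ← ENNReal.ofReal_mul (Nat.cast_nonneg _)]
    _ < ENNReal.ofReal (2 * (K : ℝ) ^ ((4 : ℝ) + 2 * ε) / (n : ℝ) ^ ((2 : ℝ) + 2 * ε)) :=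
        (ENNReal.ofReal_lt_ofReal_iff htarget_pos).mpr hcount
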